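/- Let α be a finite type and let p and q be probability mass functions on α with p(x) + q(x) > 0 for all x. Define the optimal discriminator d*(x) = p(x) / (p(x) + q(x)). Then, restricting all sums to the support of p (respectively q), one has ∑_{x : p(x) > 0} p(x) · ln d*(x) + ∑_{x : q(x) > 0} q(x) · ln (1 − d*(x)) = 2 · JSD(p,q) − ln 4, where JSD(p,q) = (1/2) · KL(p‖m) + (1/2) · KL(q‖m) with m = (p+q)/2. (Equality case of the variational bound on the Jensen–Shannon divergence: the discriminator objective attains its supremum 2·JSD − ln 4 at d*.) -/

import Mathlib

open Finset

/-- Equality case of the variational bound on the Jensen–Shannon divergence: the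
discriminator objective attains its supremum `2·JSD(p,q) − ln 4` at the optimal
discriminator `d*(x) = p(x)/(p(x)+q(x))`. -/
theorem infomatch_stmt9
    {α : Type*} [Fintype α]
    (p q : α → ℝ)
    (hp0 : ∀ x, 0 ≤ p x) (hp1 : ∑ x, p x = 1)
    (hq0 : ∀ x, 0 ≤ q x) (hq1 : ∑ x, q x = 1)
    (hpq : ∀ x, 0 < p x + q x)
    (dstar : α → ℝ) (hdstar : ∀ x, dstar x = p x / (p x + q x))
    (m : α → ℝ) (hm : ∀ x, m x = (p x + q x) / 2)
    (JSD : ℝ)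
    (hJSD : JSD
      = (1 / 2) * ∑ x ∈ Finset.univ.filter (fun x => 0 < p x),
          p x * Real.log (p x / m x)
      + (1 / 2) * ∑ x ∈ Finset.univ.filter (fun x => 0 < q x),
          q x * Real.log (q x / m x)) :
    ∑ x ∈ Finset.univ.filter (fun x => 0 < p x), p x * Real.log (dstar x)
    + ∑ x ∈ Finset.univ.filter (fun x => 0 < q x), q x * Real.log (1 - dstar x)
    = 2 * JSD - Real.log 4 := by
  have hm0 : ∀ x, 0 < m x := fun x => by rw [hm]; linarith [hpq x]
  have hps : ∑ x ∈ Finset.univ.filter (fun x => 0 < p x), p x = 1 := by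
    rw [← hp1]
    apply Finset.sum_filter_of_ne
    intro x _ hx
    exact lt_of_le_of_ne (hp0 x) (Ne.symm hx)
  have hqs : ∑ x ∈ Finset.univ.filter (fun x => 0 < q x), q x = 1 := by
    rw [← hq1]
    apply Finset.sum_filter_of_ne
    intro x _ hx
    exact lt_of_le_of_ne (hq0 x) (Ne.symm hx)
  have h1 : ∑ x ∈ Finset.univ.filter (fun x => 0 < p x), p x * Real.log (dstar x)
      = ∑ x ∈ Finset.univ.filter (fun x => 0 < p x),
          (p x * Real.log (p x / m x) - p x * Real.log 2) := by
    apply Finset.sum_congr rfl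
    intro x hx
    rw [Finset.mem_filter] at hx
    have hpx := hx.2
    have hd : dstar x = (p x / m x) / 2 := by
      rw [hdstar, hm]; field_simp
    rw [hd, Real.log_div (ne_of_gt (div_pos hx.2 (hm0 x))) (by norm_num), mul_sub]
  have h2 : ∑ x ∈ Finset.univ.filter (fun x => 0 < q x), q x * Real.log (1 - dstar x)
      = ∑ x ∈ Finset.univ.filter (fun x => 0 < q x),
          (q x * Real.log (q x / m x) - q x * Real.log 2) := by
    apply Finset.sum_congr rfl
    intro x hx
    rw [Finset.mem_filter] at hx
    have hqx := hx.2
    have hd : 1 - dstar x = (q x / m x) / 2 := by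
      rw [hdstar, hm]
      have := hpq x
      field_simp
      ring
    rw [hd, Real.log_div (ne_of_gt (div_pos hx.2 (hm0 x))) (by norm_num), mul_sub]
  rw [h1, h2, Finset.sum_sub_distrib, Finset.sum_sub_distrib,
    ← Finset.sum_mul, ← Finset.sum_mul, hps, hqs, hJSD]
  have h4 : Real.log 4 = 2 * Real.log 2 := by
    rw [show (4:ℝ) = 2^2 by norm_num, Real.log_pow]; push_cast; ring
  rw [h4]; ring
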